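/- The optimal measurement for a GU state set can be chosen GU: Let {ρ_i = U_i ρ U_i^*} be a GU state set and fix 0 ≤ β < 1. Then there exists a positive semidefinite Hermitian n×n matrix Π such that the family Π_i = U_i Π U_i^* (1 ≤ i ≤ m), Π_0 = I − Σ_{i=1}^m Π_i, is a measurement with P_I = β, and P_D({Π_i}) ≥ P_D({Π'_i}) for every measurement {Π'_i}_{i=0}^m with P_I({Π'_i}) = β. -/

import Mathlib

open Matrix BigOperators ComplexOrder

section GUHelpers
variable {n : ℕ}

private lemma psdAdd {A B : Matrix (Fin n) (Fin n) ℂ} (hA : A.PosSemidef) (hB : B.PosSemidef) :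
    (A + B).PosSemidef :=
  posSemidef_iff_dotProduct_mulVec.mpr ⟨hA.1.add hB.1, fun x => by
    rw [add_mulVec, dotProduct_add]; exact add_nonneg (hA.dotProduct_mulVec_nonneg x) (hB.dotProduct_mulVec_nonneg x)⟩

private lemma psdSum {ι : Type*} (s : Finset ι) (f : ι → Matrix (Fin n) (Fin n) ℂ)
    (h : ∀ i ∈ s, (f i).PosSemidef) : (∑ i ∈ s, f i).PosSemidef := by
  classical
  induction s using Finset.induction_on with
  | empty => simpa using Matrix.PosSemidef.zero
  | insert _ _ hx ih =>
    rw [Finset.sum_insert hx]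
    exact psdAdd (h _ (Finset.mem_insert_self _ _))
      (ih fun i hi => h i (Finset.mem_insert_of_mem hi))

private lemma psdSmul {A : Matrix (Fin n) (Fin n) ℂ} (hA : A.PosSemidef) {r : ℝ} (hr : 0 ≤ r) :
    ((r : ℂ) • A).PosSemidef := by
  refine posSemidef_iff_dotProduct_mulVec.mpr ⟨?_, fun x => ?_⟩
  · unfold Matrix.IsHermitian
    rw [conjTranspose_smul, hA.1.eq, Complex.star_def, Complex.conj_ofReal]
  · rw [smul_mulVec, dotProduct_smul, smul_eq_mul]
    exact mul_nonneg (Complex.zero_le_real.mpr hr) (hA.dotProduct_mulVec_nonneg x)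

private lemma starSingle (a : Fin n) (c : ℂ) :
    star (Pi.single a c : Fin n → ℂ) = Pi.single a (star c) := by
  funext p
  simp [Pi.single_apply, apply_ite (star : ℂ → ℂ)]

private lemma psdDiag {A : Matrix (Fin n) (Fin n) ℂ} (hA : A.PosSemidef) (a : Fin n) :
    0 ≤ A a a := by
  have := hA.dotProduct_mulVec_nonneg (Pi.single a 1)
  simpa [mulVec_single, starSingle, single_dotProduct] using this

private lemma psdQuad {A : Matrix (Fin n) (Fin n) ℂ} (hA : A.PosSemidef) (a b : Fin n)
    (c d : ℂ) :
    0 ≤ (c * A a a + d * A a b) * (starRingEnd ℂ) c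
      + (c * A b a + d * A b b) * (starRingEnd ℂ) d := by
  have h := hA.dotProduct_mulVec_nonneg (Pi.single a c + Pi.single b d)
  have hs : star (Pi.single a c + Pi.single b d : Fin n → ℂ) =
      (Pi.single a (star c) + Pi.single b (star d) : Fin n → ℂ) := by
    rw [star_add, starSingle, starSingle]
  rw [hs, mulVec_add, mulVec_single, mulVec_single] at h
  simp only [add_dotProduct, single_dotProduct, dotProduct_add, Complex.star_def,
    op_smul_eq_smul, Pi.smul_apply, col_apply, smul_eq_mul] at h
  convert h using 1
  ring

private lemma psdEntryBound {A : Matrix (Fin n) (Fin n) ℂ} (hA : A.PosSemidef)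
    (h1 : (1 - A).PosSemidef) (a b : Fin n) : ‖A a b‖ ≤ 1 := by
  have hdiag : ∀ p, 0 ≤ (A p p).re ∧ (A p p).im = 0 ∧ (A p p).re ≤ 1 := by
    intro p
    have h2 := (Complex.le_def).mp (psdDiag hA p)
    have h3 := (Complex.le_def).mp (psdDiag h1 p)
    simp only [Complex.zero_re, Complex.zero_im, Matrix.sub_apply, Matrix.one_apply_eq,
      Complex.sub_re, Complex.one_re] at h2 h3
    exact ⟨h2.1, h2.2.symm, by linarith [h3.1]⟩
  obtain ⟨hre0a, him0a, hre1a⟩ := hdiag a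
  obtain ⟨hre0b, him0b, hre1b⟩ := hdiag b
  by_cases hab : a = b
  · subst hab
    have h4 : A a a = ((A a a).re : ℂ) := Complex.ext rfl (by simp [him0a])
    rw [h4, Complex.norm_real, Real.norm_eq_abs, abs_le]
    constructor <;> linarith
  · by_cases hz : A a b = 0
    · simp [hz]
    · set z := A a b with hzdef
      set r := ‖z‖ with hrdef
      have hr0 : 0 < r := norm_pos_iff.mpr hz
      have hba : A b a = (starRingEnd ℂ) z := by
        rw [← hA.1.eq]; simp [conjTranspose_apply, hzdef]
      have h := psdQuad hA a b (r : ℂ) (-(starRingEnd ℂ) z)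
      rw [hba] at h
      have hzz : z * (starRingEnd ℂ) z = ((r : ℂ))^2 := by
        rw [Complex.mul_conj]
        norm_cast
        rw [Complex.normSq_eq_norm_sq, hrdef]
      have hE : ((r : ℂ) * A a a + (-(starRingEnd ℂ) z) * z) * (starRingEnd ℂ) (r : ℂ)
          + ((r : ℂ) * (starRingEnd ℂ) z + (-(starRingEnd ℂ) z) * A b b) *
            (starRingEnd ℂ) (-(starRingEnd ℂ) z)
          = ((r^2 : ℝ) : ℂ) * (A a a + A b b) - ((2 * r^3 : ℝ) : ℂ) := by
        simp only [map_neg, Complex.conj_conj, Complex.conj_ofReal]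
        push_cast
        linear_combination (A b b - 2 * (r : ℂ)) * hzz
      rw [hE] at h
      have h5 := (Complex.le_def).mp h
      simp only [Complex.zero_re, Complex.sub_re, Complex.mul_re, Complex.ofReal_re,
        Complex.ofReal_im, Complex.add_re, Complex.add_im, Complex.zero_im] at h5
      have h6 : 0 ≤ r^2 * ((A a a).re + (A b b).re) - 2 * r^3 := by
        have h8 := h5.1
        simp [him0a, him0b] at h8
        linarith [h8]
      have h7 : r ≤ 1 := by nlinarith [hr0, mul_pos hr0 hr0]
      exact h7

private lemma isClosedPsd : IsClosed {A : Matrix (Fin n) (Fin n) ℂ | A.PosSemidef} := by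
  have hset : {A : Matrix (Fin n) (Fin n) ℂ | A.PosSemidef} =
      {A : Matrix (Fin n) (Fin n) ℂ | Aᴴ = A} ∩
      ⋂ x : Fin n → ℂ, {A : Matrix (Fin n) (Fin n) ℂ |
        0 ≤ (star x ⬝ᵥ A *ᵥ x).re ∧ (star x ⬝ᵥ A *ᵥ x).im = 0} := by
    ext A
    simp only [Set.mem_setOf_eq, Set.mem_inter_iff, Set.mem_iInter]
    rw [posSemidef_iff_dotProduct_mulVec]
    constructor
    · rintro ⟨h1, h2⟩
      refine ⟨h1, fun x => ?_⟩
      have := (Complex.le_def).mp (h2 x)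
      simpa using ⟨this.1, this.2.symm⟩
    · rintro ⟨h1, h2⟩
      refine ⟨h1, fun x => ?_⟩
      rw [Complex.le_def]
      simpa using ⟨(h2 x).1, ((h2 x).2).symm⟩
  rw [hset]
  refine IsClosed.inter (isClosed_eq (continuous_id.matrix_conjTranspose) continuous_id) ?_
  refine isClosed_iInter fun x => ?_
  have hf : Continuous fun A : Matrix (Fin n) (Fin n) ℂ => star x ⬝ᵥ A *ᵥ x :=
    (continuous_const).dotProduct (continuous_id.matrix_mulVec continuous_const)
  exact IsClosed.inter (isClosed_le continuous_const (Complex.continuous_re.comp hf))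
    (isClosed_eq (Complex.continuous_im.comp hf) continuous_const)

private lemma compactBox : IsCompact {A : Matrix (Fin n) (Fin n) ℂ | ∀ a b, ‖A a b‖ ≤ 1} := by
  have hset : {A : Matrix (Fin n) (Fin n) ℂ | ∀ a b, ‖A a b‖ ≤ 1} =
      Set.pi Set.univ (fun _ : Fin n => Set.pi Set.univ
        (fun _ : Fin n => Metric.closedBall (0:ℂ) 1)) := by
    ext A
    constructor
    · intro h
      intro a _
      intro b _
      simpa [mem_closedBall_zero_iff] using h a b
    · intro h a b
      have := h a (Set.mem_univ a) b (Set.mem_univ b)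
      simpa [mem_closedBall_zero_iff] using this
  rw [hset]
  exact isCompact_univ_pi fun a => isCompact_univ_pi fun b => isCompact_closedBall _ _

end GUHelpers

/-- The optimal measurement for a GU state set can be chosen GU: for every
0 ≤ β < 1 there is a positive semidefinite Π such that Π_i = U_i Π U_i^*
(with Π₀ = I − Σ_i Π_i) is a measurement with P_I = β that maximizes P_D
among all measurements with P_I = β. -/
theorem stmt_15 {n m : ℕ} (hm : 0 < m)
    (U : Fin m → Matrix (Fin n) (Fin n) ℂ)
    (hUunit : ∀ i, U i * (U i)ᴴ = 1)
    (hUinj : Function.Injective U)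
    (hU1 : U ⟨0, hm⟩ = 1)
    (hUmul : ∀ i j, ∃ k, U i * U j = U k)
    (hUinv : ∀ i, ∃ j, (U i)ᴴ = U j)
    (ρgen : Matrix (Fin n) (Fin n) ℂ)
    (hρgenpsd : ρgen.PosSemidef) (hρgentr : ρgen.trace = 1)
    (ρ : Fin m → Matrix (Fin n) (Fin n) ℂ)
    (hρ : ∀ i, ρ i = U i * ρgen * (U i)ᴴ)
    (Δ : Matrix (Fin n) (Fin n) ℂ) (hΔ : Δ = (1 / (m : ℂ)) • ∑ i, ρ i)
    (β : ℝ) (hβ0 : 0 ≤ β) (hβ1 : β < 1) :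
    ∃ P : Matrix (Fin n) (Fin n) ℂ, P.PosSemidef ∧
      (1 - ∑ i, U i * P * (U i)ᴴ).PosSemidef ∧
      (Δ * (1 - ∑ i, U i * P * (U i)ᴴ)).trace = (β : ℂ) ∧
      ∀ (N0 : Matrix (Fin n) (Fin n) ℂ) (N : Fin m → Matrix (Fin n) (Fin n) ℂ),
        N0.PosSemidef → (∀ i, (N i).PosSemidef) → (N0 + ∑ i, N i = 1) →
        (Δ * N0).trace = (β : ℂ) →
        (1 / m : ℝ) * ∑ i, ((ρ i * N i).trace).re
          ≤ (1 / m : ℝ) * ∑ i, ((ρ i * (U i * P * (U i)ᴴ)).trace).re := by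
  classical
  -- basic facts
  have hmR : (0:ℝ) < m := Nat.cast_pos.mpr hm
  have hmne : (m : ℂ) ≠ 0 := Nat.cast_ne_zero.mpr hm.ne'
  have hU2 : ∀ i, (U i)ᴴ * U i = 1 := fun i => mul_eq_one_comm.mp (hUunit i)
  choose gmul hgmul using hUmul
  -- bijectivity of translations
  have hrb : ∀ i, Function.Bijective (fun b => gmul b i) := by
    intro i
    rw [← Finite.injective_iff_bijective]
    intro b b' hbb
    have h1 : U b * U i = U b' * U i := by
      rw [hgmul, hgmul]; exact congrArg U hbb
    have h2 : U b * U i * (U i)ᴴ = U b' * U i * (U i)ᴴ := by rw [h1]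
    rw [Matrix.mul_assoc, Matrix.mul_assoc, hUunit, Matrix.mul_one, Matrix.mul_one] at h2
    exact hUinj h2
  have hlb : ∀ b, Function.Bijective (fun i => gmul b i) := by
    intro b
    rw [← Finite.injective_iff_bijective]
    intro i i' hii
    have h1 : U b * U i = U b * U i' := by
      rw [hgmul, hgmul]; exact congrArg U hii
    have h2 : (U b)ᴴ * (U b * U i) = (U b)ᴴ * (U b * U i') := by rw [h1]
    rw [← Matrix.mul_assoc, ← Matrix.mul_assoc, hU2, Matrix.one_mul, Matrix.one_mul] at h2
    exact hUinj h2
  -- trace of each state and of Δ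
  have hρtr : ∀ i, (ρ i).trace = 1 := by
    intro i
    rw [hρ i, trace_mul_comm, ← Matrix.mul_assoc, hU2, Matrix.one_mul, hρgentr]
  have htrΔ : Δ.trace = 1 := by
    rw [hΔ, trace_smul, trace_sum]
    simp only [hρtr]
    simp [hmne]
  -- invariance of Δ
  have hρinv : ∀ a i, U a * ρ i * (U a)ᴴ = ρ (gmul a i) := by
    intro a i
    rw [hρ i, hρ (gmul a i), ← hgmul a i, conjTranspose_mul]
    simp only [Matrix.mul_assoc]
  have hΔinv : ∀ a, U a * Δ * (U a)ᴴ = Δ := by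
    intro a
    rw [hΔ]
    rw [Matrix.mul_smul, Matrix.smul_mul, Finset.mul_sum, Finset.sum_mul]
    congr 1
    calc ∑ i, U a * ρ i * (U a)ᴴ = ∑ i, ρ (gmul a i) := by
          exact Finset.sum_congr rfl fun i _ => hρinv a i
      _ = ∑ i, ρ i := Function.Bijective.sum_comp (hlb a) _
  -- the compact set of measurements
  set K : Set (Matrix (Fin n) (Fin n) ℂ × (Fin m → Matrix (Fin n) (Fin n) ℂ)) :=
    {p | p.1.PosSemidef ∧ (∀ i, (p.2 i).PosSemidef) ∧ p.1 + ∑ i, p.2 i = 1 ∧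
      (Δ * p.1).trace = (β : ℂ)} with hK
  have hKne : K.Nonempty := by
    refine ⟨((β : ℂ) • 1, fun _ => (((1 - β)/m : ℝ) : ℂ) • 1), ?_, ?_, ?_, ?_⟩
    · exact psdSmul Matrix.PosSemidef.one hβ0
    · intro i
      exact psdSmul Matrix.PosSemidef.one (div_nonneg (by linarith) (Nat.cast_nonneg m))
    · simp only [Finset.sum_const, Finset.card_univ, Fintype.card_fin]
      rw [← Nat.cast_smul_eq_nsmul ℂ m, smul_smul, ← add_smul]
      rw [show (β : ℂ) + (m : ℂ) * (((1 - β)/m : ℝ) : ℂ) = 1 by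
        push_cast
        field_simp
        ring]
      rw [one_smul]
    · rw [Matrix.mul_smul, trace_smul, smul_eq_mul, Matrix.mul_one, htrΔ, mul_one]
  have hKsub : K ⊆ {A : Matrix (Fin n) (Fin n) ℂ | ∀ a b, ‖A a b‖ ≤ 1} ×ˢ
      Set.pi Set.univ (fun _ : Fin m =>
        {A : Matrix (Fin n) (Fin n) ℂ | ∀ a b, ‖A a b‖ ≤ 1}) := by
    rintro ⟨N0, N⟩ ⟨h1, h2, h3, _⟩
    constructor
    · have hc : (1 : Matrix (Fin n) (Fin n) ℂ) - N0 = ∑ i, N i := by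
        rw [← h3]; abel
      exact fun a b => psdEntryBound h1 (hc ▸ psdSum _ _ fun i _ => h2 i) a b
    · intro i _
      have hc : (1 : Matrix (Fin n) (Fin n) ℂ) - N i =
          N0 + ∑ j ∈ Finset.univ.erase i, N j := by
        rw [← h3, ← Finset.sum_erase_add Finset.univ N (Finset.mem_univ i)]
        abel
      exact fun a b => psdEntryBound (h2 i)
        (hc ▸ psdAdd h1 (psdSum _ _ fun j _ => h2 j)) a b
  have hKclosed : IsClosed K := by
    have : K = (Prod.fst ⁻¹' {A : Matrix (Fin n) (Fin n) ℂ | A.PosSemidef}) ∩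
        ((⋂ i : Fin m, (fun p : Matrix (Fin n) (Fin n) ℂ ×
            (Fin m → Matrix (Fin n) (Fin n) ℂ) => p.2 i) ⁻¹'
          {A : Matrix (Fin n) (Fin n) ℂ | A.PosSemidef}) ∩
        ({p | p.1 + ∑ i, p.2 i = 1} ∩ {p | (Δ * p.1).trace = (β : ℂ)})) := by
      ext p
      simp only [hK, Set.mem_setOf_eq, Set.mem_inter_iff, Set.mem_preimage, Set.mem_iInter]
      try tauto
    rw [this]
    refine IsClosed.inter (isClosedPsd.preimage continuous_fst) (IsClosed.inter ?_ ?_)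
    · exact isClosed_iInter fun i =>
        isClosedPsd.preimage ((continuous_apply i).comp continuous_snd)
    · refine IsClosed.inter ?_ ?_
      · exact isClosed_eq (continuous_fst.add
          (continuous_finset_sum _ fun i _ => (continuous_apply i).comp continuous_snd))
          continuous_const
      · exact isClosed_eq
          ((continuous_const.matrix_mul continuous_fst).matrix_trace) continuous_const
  have hKcompact : IsCompact K :=
    IsCompact.of_isClosed_subset
      (compactBox.prod (isCompact_univ_pi fun _ => compactBox)) hKclosed hKsub
  -- maximize the detection probability
  have hfc : Continuous fun p : Matrix (Fin n) (Fin n) ℂ ×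
      (Fin m → Matrix (Fin n) (Fin n) ℂ) => ∑ i, ((ρ i * p.2 i).trace).re :=
    continuous_finset_sum _ fun i _ => Complex.continuous_re.comp
      ((continuous_const.matrix_mul ((continuous_apply i).comp continuous_snd)).matrix_trace)
  obtain ⟨q, hqK, hqmax⟩ := hKcompact.exists_isMaxOn hKne hfc.continuousOn
  obtain ⟨hq1, hq2, hq3, hq4⟩ := hqK
  -- the symmetrized measurement operator
  set c : ℂ := ((1/m : ℝ) : ℂ) with hc
  set P : Matrix (Fin n) (Fin n) ℂ := c • ∑ a, (U a)ᴴ * q.2 a * U a with hP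
  have hcm : c * (m : ℂ) = 1 := by
    rw [hc]
    push_cast
    field_simp
  have hPpsd : P.PosSemidef :=
    psdSmul (psdSum _ _ fun a _ => (hq2 a).conjTranspose_mul_mul_same (U a)) (by positivity)
  -- key conjugation identity
  have hkey : ∀ i b, U i * ((U (gmul b i))ᴴ * q.2 (gmul b i) * U (gmul b i)) * (U i)ᴴ
      = (U b)ᴴ * q.2 (gmul b i) * U b := by
    intro i b
    rw [← hgmul b i, conjTranspose_mul]
    simp only [Matrix.mul_assoc]
    rw [hUunit i, Matrix.mul_one, ← Matrix.mul_assoc (U i), hUunit i, Matrix.one_mul]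
  have hPi : ∀ i, U i * P * (U i)ᴴ = c • ∑ b, (U b)ᴴ * q.2 (gmul b i) * U b := by
    intro i
    rw [hP, Matrix.mul_smul, Matrix.smul_mul, Finset.mul_sum, Finset.sum_mul]
    congr 1
    calc ∑ a, U i * ((U a)ᴴ * q.2 a * U a) * (U i)ᴴ
        = ∑ b, U i * ((U (gmul b i))ᴴ * q.2 (gmul b i) * U (gmul b i)) * (U i)ᴴ :=
          (Function.Bijective.sum_comp (hrb i)
            (fun a => U i * ((U a)ᴴ * q.2 a * U a) * (U i)ᴴ)).symm
      _ = ∑ b, (U b)ᴴ * q.2 (gmul b i) * U b := Finset.sum_congr rfl fun b _ => hkey i b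
  have hq3' : ∑ k, q.2 k = 1 - q.1 := by
    rw [← hq3]; abel
  have hSig : ∑ i, U i * P * (U i)ᴴ = c • ∑ b, (U b)ᴴ * (1 - q.1) * U b := by
    calc ∑ i, U i * P * (U i)ᴴ = ∑ i, c • ∑ b, (U b)ᴴ * q.2 (gmul b i) * U b :=
          Finset.sum_congr rfl fun i _ => hPi i
      _ = c • ∑ i, ∑ b, (U b)ᴴ * q.2 (gmul b i) * U b := (Finset.smul_sum).symm
      _ = c • ∑ b, ∑ i, (U b)ᴴ * q.2 (gmul b i) * U b := by rw [Finset.sum_comm]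
      _ = c • ∑ b, (U b)ᴴ * (1 - q.1) * U b := by
          congr 1
          refine Finset.sum_congr rfl fun b _ => ?_
          rw [← hq3']
          calc ∑ i, (U b)ᴴ * q.2 (gmul b i) * U b
              = (U b)ᴴ * (∑ i, q.2 (gmul b i)) * U b := by
                rw [Finset.mul_sum, Finset.sum_mul]
            _ = (U b)ᴴ * (∑ k, q.2 k) * U b := by
                rw [Function.Bijective.sum_comp (hlb b) q.2]
  have hQ0 : 1 - ∑ i, U i * P * (U i)ᴴ = c • ∑ b, (U b)ᴴ * q.1 * U b := by
    rw [hSig]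
    have expand : ∀ b : Fin m, (U b)ᴴ * (1 - q.1) * U b =
        1 - (U b)ᴴ * q.1 * U b := by
      intro b
      rw [Matrix.mul_sub, Matrix.sub_mul, Matrix.mul_one, hU2 b]
    rw [Finset.sum_congr rfl fun b _ => expand b, Finset.sum_sub_distrib, smul_sub,
      Finset.sum_const, Finset.card_univ, Fintype.card_fin,
      ← Nat.cast_smul_eq_nsmul ℂ m, smul_smul, hcm, one_smul]
    exact (sub_sub_cancel 1 _)
  have hQ0psd : (1 - ∑ i, U i * P * (U i)ᴴ).PosSemidef := by
    rw [hQ0]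
    exact psdSmul (psdSum _ _ fun b _ => hq1.conjTranspose_mul_mul_same (U b)) (by positivity)
  -- trace condition
  have htrQ0 : (Δ * (1 - ∑ i, U i * P * (U i)ᴴ)).trace = (β : ℂ) := by
    rw [hQ0, Matrix.mul_smul, trace_smul, Finset.mul_sum, trace_sum]
    have tb : ∀ b, (Δ * ((U b)ᴴ * q.1 * U b)).trace = (β : ℂ) := by
      intro b
      calc (Δ * ((U b)ᴴ * q.1 * U b)).trace
          = ((Δ * (U b)ᴴ * q.1) * U b).trace := by simp only [Matrix.mul_assoc]
        _ = (U b * (Δ * (U b)ᴴ * q.1)).trace := trace_mul_comm _ _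
        _ = ((U b * Δ * (U b)ᴴ) * q.1).trace := by simp only [Matrix.mul_assoc]
        _ = (Δ * q.1).trace := by rw [hΔinv b]
        _ = (β : ℂ) := hq4
    rw [Finset.sum_congr rfl fun b _ => tb b, Finset.sum_const, Finset.card_univ,
      Fintype.card_fin, ← Nat.cast_smul_eq_nsmul ℂ m, smul_smul, hcm, one_smul]
  -- detection probability equality
  have hstep1 : ∀ i, (ρ i * (U i * P * (U i)ᴴ)).trace = (ρgen * P).trace := by
    intro i
    rw [hρ i]
    have e1 : (U i * ρgen * (U i)ᴴ) * (U i * P * (U i)ᴴ) = U i * (ρgen * (P * (U i)ᴴ)) := by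
      simp only [Matrix.mul_assoc]
      rw [← Matrix.mul_assoc ((U i)ᴴ) (U i), hU2, Matrix.one_mul]
    rw [e1, trace_mul_comm]
    simp only [Matrix.mul_assoc]
    rw [hU2, Matrix.mul_one]
  have hstep2 : (ρgen * P).trace = c * ∑ a, (ρ a * q.2 a).trace := by
    rw [hP, Matrix.mul_smul, trace_smul, smul_eq_mul, Finset.mul_sum, trace_sum]
    congr 1
    refine Finset.sum_congr rfl fun a _ => ?_
    rw [hρ a]
    calc (ρgen * ((U a)ᴴ * q.2 a * U a)).trace
        = ((ρgen * (U a)ᴴ * q.2 a) * U a).trace := by simp only [Matrix.mul_assoc]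
      _ = (U a * (ρgen * (U a)ᴴ * q.2 a)).trace := trace_mul_comm _ _
      _ = ((U a * ρgen * (U a)ᴴ) * q.2 a).trace := by simp only [Matrix.mul_assoc]
  have hPD : ∑ i, (ρ i * (U i * P * (U i)ᴴ)).trace = ∑ a, (ρ a * q.2 a).trace := by
    rw [Finset.sum_congr rfl fun i _ => hstep1 i, Finset.sum_const, Finset.card_univ,
      Fintype.card_fin, ← Nat.cast_smul_eq_nsmul ℂ m, smul_eq_mul, hstep2, ← mul_assoc,
      mul_comm (m:ℂ) c, hcm, one_mul]
  refine ⟨P, hPpsd, hQ0psd, htrQ0, ?_⟩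
  intro N0 N h1 h2 h3 h4
  have hmem : (N0, N) ∈ K := ⟨h1, h2, h3, h4⟩
  have hle : ∑ i, ((ρ i * N i).trace).re ≤ ∑ i, ((ρ i * q.2 i).trace).re := by
    simpa using hqmax hmem
  have heq : ∑ i, ((ρ i * (U i * P * (U i)ᴴ)).trace).re
      = ∑ i, ((ρ i * q.2 i).trace).re := by
    rw [← Complex.re_sum, ← Complex.re_sum, hPD]
  refine mul_le_mul_of_nonneg_left ?_ (by positivity)
  rw [heq]
  exact hle
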